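/- Let λ_r > λ_{r+1}, set Δ = λ_r − λ_{r+1} > 0, and let ε > 0, η > 0, δ > 0, r, m be given with r < m. For i = r+1, …, m and j = 1, …, r let ζ_ij(T) be real square-integrable random variables on a probability space and suppose 𝔼[ζ_ij(T)²] ≤ ζ_ij(0)²·e^{−2ΔT} + G_ij²/(2Δ), where ζ_ij(0), G_ij ≥ 0 are constants with η·Σ_{i=r+1}^m Σ_{j=1}^r ζ_ij(0)² ≤ δ², and let G_m = max_{1 ≤ j ≤ r} Σ_{i=r+1}^m G_ij². Assume Δε > 4·η·r·G_m and T ≥ max(0, (1/(2Δ))·log( 8Δδ² / (Δε − 4ηrG_m) )). Then ℙ( η·Σ_{i=r+1}^m Σ_{j=1}^r ζ_ij(T)² ≤ ε ) ≥ 3/4. -/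

import Mathlib

open Finset MeasureTheory

/-- Proposition 4.10 of the paper (Stage 3, convergence to global optima), proved by
Markov's inequality: if the rescaled principal-angle coordinates at time `T` satisfy
`𝔼[ζ_ij(T)²] ≤ ζ_ij(0)² e^{−2ΔT} + G_ij²/(2Δ)` with `η Σ ζ_ij(0)² ≤ δ²`, `Δε > 4ηrG_m`
and `T ≥ max(0, (1/(2Δ)) log(8Δδ²/(Δε − 4ηrG_m)))`, then
`ℙ(η Σ ζ_ij(T)² ≤ ε) ≥ 3/4`. -/
theorem stage3_convergence_time
    {Ω : Type*} [MeasurableSpace Ω] (P : Measure Ω) [IsProbabilityMeasure P]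
    (m r : ℕ) (hr0 : 0 < r) (hrm : r < m)
    (lamr lamr1 : ℝ) (hgap : lamr1 < lamr)
    (ε η δ T : ℝ) (hε : 0 < ε) (hη : 0 < η) (hδ : 0 < δ)
    (ζT : Fin m → Fin r → Ω → ℝ) (ζ0 G : Fin m → Fin r → ℝ)
    (hζ0 : ∀ i j, 0 ≤ ζ0 i j) (hG : ∀ i j, 0 ≤ G i j)
    (hL2 : ∀ i j, Integrable (fun ω => (ζT i j ω) ^ 2) P)
    (hmeasζ : ∀ i j, Measurable (ζT i j))
    (hmoment : ∀ i : Fin m, r ≤ (i : ℕ) → ∀ j : Fin r,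
      ∫ ω, (ζT i j ω) ^ 2 ∂P ≤
        (ζ0 i j) ^ 2 * Real.exp (-2 * (lamr - lamr1) * T) + (G i j) ^ 2 / (2 * (lamr - lamr1)))
    (hinit : η * ∑ i ∈ univ.filter (fun i : Fin m => r ≤ (i : ℕ)), ∑ j, (ζ0 i j) ^ 2 ≤ δ ^ 2)
    (hslack : 4 * η * r *
        (univ.sup' (univ_nonempty_iff.mpr ⟨⟨0, hr0⟩⟩)
          (fun j : Fin r => ∑ i ∈ univ.filter (fun i : Fin m => r ≤ (i : ℕ)), (G i j) ^ 2)) <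
      (lamr - lamr1) * ε)
    (hT : max 0 ((1 / (2 * (lamr - lamr1))) *
        Real.log (8 * (lamr - lamr1) * δ ^ 2 /
          ((lamr - lamr1) * ε - 4 * η * r *
            (univ.sup' (univ_nonempty_iff.mpr ⟨⟨0, hr0⟩⟩)
              (fun j : Fin r =>
                ∑ i ∈ univ.filter (fun i : Fin m => r ≤ (i : ℕ)), (G i j) ^ 2))))) ≤ T) :
    ENNReal.ofReal (3 / 4) ≤
      P {ω : Ω |
        η * ∑ i ∈ univ.filter (fun i : Fin m => r ≤ (i : ℕ)), ∑ j, (ζT i j ω) ^ 2 ≤ ε} := by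
  set Δ : ℝ := lamr - lamr1 with hΔdef
  have hΔ : 0 < Δ := sub_pos.mpr hgap
  set F := univ.filter (fun i : Fin m => r ≤ (i : ℕ)) with hF
  set Gm := univ.sup' (univ_nonempty_iff.mpr ⟨⟨0, hr0⟩⟩)
      (fun j : Fin r => ∑ i ∈ F, (G i j) ^ 2) with hGmdef
  set c : ℝ := Δ * ε - 4 * η * r * Gm with hcdef
  have hcpos : 0 < c := sub_pos.mpr hslack
  -- Gm nonneg
  have hGm0 : 0 ≤ Gm := by
    refine le_trans ?_ (le_sup' (fun j : Fin r => ∑ i ∈ F, (G i j) ^ 2)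
      (mem_univ (⟨0, hr0⟩ : Fin r)))
    positivity
  -- exponential bound
  have hApos : 0 < 8 * Δ * δ ^ 2 / c := by positivity
  have hexp : Real.exp (-2 * Δ * T) ≤ c / (8 * Δ * δ ^ 2) := by
    have hTX : (1 / (2 * Δ)) * Real.log (8 * Δ * δ ^ 2 / c) ≤ T :=
      le_trans (le_max_right _ _) hT
    have hlog : Real.log (8 * Δ * δ ^ 2 / c) ≤ 2 * Δ * T := by
      have h2 := mul_le_mul_of_nonneg_left hTX (by positivity : (0:ℝ) ≤ 2 * Δ)
      have h2Δ : (2 * Δ) * ((1 / (2 * Δ)) * Real.log (8 * Δ * δ ^ 2 / c))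
          = Real.log (8 * Δ * δ ^ 2 / c) := by
        field_simp
      linarith [h2, h2Δ.symm.le]
    calc Real.exp (-2 * Δ * T) ≤ Real.exp (-(Real.log (8 * Δ * δ ^ 2 / c))) := by
          apply Real.exp_le_exp.mpr; linarith
      _ = c / (8 * Δ * δ ^ 2) := by
          rw [Real.exp_neg, Real.exp_log hApos, inv_div]
  -- define S
  set S : Ω → ℝ := fun ω => η * ∑ i ∈ F, ∑ j, (ζT i j ω) ^ 2 with hS
  have hSmeas : Measurable S := by
    apply Measurable.const_mul
    exact Finset.measurable_sum _ fun i _ =>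
      Finset.measurable_sum _ fun j _ => (hmeasζ i j).pow_const 2
  have hSint : Integrable S P := by
    apply Integrable.const_mul
    exact integrable_finset_sum _ fun i _ => integrable_finset_sum _ fun j _ => hL2 i j
  have hSnonneg : ∀ ω, 0 ≤ S ω := by
    intro ω
    apply mul_nonneg hη.le
    exact Finset.sum_nonneg fun i _ => Finset.sum_nonneg fun j _ => sq_nonneg _
  -- expectation bound
  have hEsum : ∫ ω, S ω ∂P = η * ∑ i ∈ F, ∑ j, ∫ ω, (ζT i j ω) ^ 2 ∂P := by
    rw [integral_const_mul]
    congr 1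
    rw [integral_finset_sum _ fun i _ => integrable_finset_sum _ fun j _ => hL2 i j]
    exact Finset.sum_congr rfl fun i _ => (integral_finset_sum _ fun j _ => hL2 i j)
  have hGsum : ∑ i ∈ F, ∑ j, (G i j) ^ 2 ≤ r * Gm := by
    rw [Finset.sum_comm]
    calc ∑ j : Fin r, ∑ i ∈ F, (G i j) ^ 2 ≤ ∑ _j : Fin r, Gm :=
          Finset.sum_le_sum fun j _ =>
            le_sup' (fun j : Fin r => ∑ i ∈ F, (G i j) ^ 2) (mem_univ j)
      _ = r * Gm := by simp [mul_comm]
  have hE : ∫ ω, S ω ∂P ≤ ε / 8 := by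
    rw [hEsum]
    have h1 : ∑ i ∈ F, ∑ j, ∫ ω, (ζT i j ω) ^ 2 ∂P ≤
        (∑ i ∈ F, ∑ j, (ζ0 i j) ^ 2) * Real.exp (-2 * Δ * T)
          + (∑ i ∈ F, ∑ j, (G i j) ^ 2) / (2 * Δ) := by
      rw [Finset.sum_mul, Finset.sum_div, ← Finset.sum_add_distrib]
      refine Finset.sum_le_sum fun i hi => ?_
      rw [Finset.sum_mul, Finset.sum_div, ← Finset.sum_add_distrib]
      refine Finset.sum_le_sum fun j _ => ?_
      exact hmoment i (mem_filter.mp hi).2 j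
    have hexp_pos : (0:ℝ) < Real.exp (-2 * Δ * T) := Real.exp_pos _
    have h2 : η * ((∑ i ∈ F, ∑ j, (ζ0 i j) ^ 2) * Real.exp (-2 * Δ * T)
          + (∑ i ∈ F, ∑ j, (G i j) ^ 2) / (2 * Δ)) ≤
        δ ^ 2 * Real.exp (-2 * Δ * T) + η * (r * Gm) / (2 * Δ) := by
      have ha : η * (∑ i ∈ F, ∑ j, (ζ0 i j) ^ 2) * Real.exp (-2 * Δ * T)
          ≤ δ ^ 2 * Real.exp (-2 * Δ * T) :=
        mul_le_mul_of_nonneg_right hinit hexp_pos.le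
      have hb : η * (∑ i ∈ F, ∑ j, (G i j) ^ 2) ≤ η * (r * Gm) :=
        mul_le_mul_of_nonneg_left hGsum hη.le
      have hb' : η * (∑ i ∈ F, ∑ j, (G i j) ^ 2) / (2 * Δ) ≤ η * (r * Gm) / (2 * Δ) :=
        div_le_div_of_nonneg_right hb (by positivity) |>.trans_eq rfl
      calc η * ((∑ i ∈ F, ∑ j, (ζ0 i j) ^ 2) * Real.exp (-2 * Δ * T)
            + (∑ i ∈ F, ∑ j, (G i j) ^ 2) / (2 * Δ))
          = η * (∑ i ∈ F, ∑ j, (ζ0 i j) ^ 2) * Real.exp (-2 * Δ * T)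
            + η * (∑ i ∈ F, ∑ j, (G i j) ^ 2) / (2 * Δ) := by ring
        _ ≤ _ := add_le_add ha hb'
    have h3 : δ ^ 2 * Real.exp (-2 * Δ * T) ≤ c / (8 * Δ) := by
      have := mul_le_mul_of_nonneg_left hexp (by positivity : (0:ℝ) ≤ δ ^ 2)
      calc δ ^ 2 * Real.exp (-2 * Δ * T) ≤ δ ^ 2 * (c / (8 * Δ * δ ^ 2)) := this
        _ = c / (8 * Δ) := by field_simp
    have h4 : c / (8 * Δ) + η * (r * Gm) / (2 * Δ) = ε / 8 := by
      rw [hcdef]; field_simp; ring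
    calc η * ∑ i ∈ F, ∑ j, ∫ ω, (ζT i j ω) ^ 2 ∂P
        ≤ η * ((∑ i ∈ F, ∑ j, (ζ0 i j) ^ 2) * Real.exp (-2 * Δ * T)
            + (∑ i ∈ F, ∑ j, (G i j) ^ 2) / (2 * Δ)) :=
          mul_le_mul_of_nonneg_left h1 hη.le
      _ ≤ δ ^ 2 * Real.exp (-2 * Δ * T) + η * (r * Gm) / (2 * Δ) := h2
      _ ≤ c / (8 * Δ) + η * (r * Gm) / (2 * Δ) := by linarith
      _ = ε / 8 := h4
  -- Markov
  have hmarkov := mul_meas_ge_le_integral_of_nonneg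
    (ae_of_all P hSnonneg) hSint ε
  have htail : (P {ω | ε ≤ S ω}).toReal ≤ 1 / 8 := by
    have := hmarkov.trans hE
    rw [div_eq_mul_inv, mul_comm ε, measureReal_def] at this
    nlinarith [ENNReal.toReal_nonneg (a := P {ω | ε ≤ S ω})]
  have htail' : P {ω | ε ≤ S ω} ≤ ENNReal.ofReal (1 / 8) := by
    rw [← ENNReal.ofReal_toReal (measure_ne_top P _)]
    exact ENNReal.ofReal_le_ofReal htail
  have hltsub : P {ω | ε < S ω} ≤ ENNReal.ofReal (1 / 8) :=
    le_trans (measure_mono (Set.setOf_subset_setOf.mpr fun ω h => h.le)) htail'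
  have hmeasset : MeasurableSet {ω | ε < S ω} :=
    measurableSet_lt measurable_const hSmeas
  have hcompl : {ω : Ω | S ω ≤ ε} = {ω | ε < S ω}ᶜ := by
    ext ω; simp [not_lt]
  have key : ENNReal.ofReal (3 / 4) ≤ P {ω | S ω ≤ ε} := by
    rw [hcompl, measure_compl hmeasset (measure_ne_top P _), measure_univ]
    refine ENNReal.le_sub_of_add_le_left (measure_ne_top P _) ?_
    calc P {ω | ε < S ω} + ENNReal.ofReal (3 / 4)
        ≤ ENNReal.ofReal (1 / 8) + ENNReal.ofReal (3 / 4) :=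
          add_le_add hltsub le_rfl
      _ = ENNReal.ofReal (7 / 8) := by
          rw [← ENNReal.ofReal_add (by norm_num) (by norm_num)]; norm_num
      _ ≤ 1 := by
          rw [← ENNReal.ofReal_one]; exact ENNReal.ofReal_le_ofReal (by norm_num)
  exact key
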